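/- Let l ≥ 1, let n₁, …, n_l be positive integers and a₁, …, a_l be integers. In the ring ℚ⟦t⟧ of formal power series over ℚ, the Lefschetz zeta series Z(t) := exp(∑_{m≥1} (L(m)/m) t^m), where L(m) := ∏_{i=1}^{l} (1 + (−1)^{n_i} a_i^m), satisfies the product formula Z(t) = (1 − t)^{−1} · ∏_{∅ ≠ S ⊆ {1,…,l}} (1 − (∏_{i∈S} a_i) t)^{(−1)^{(∑_{i∈S} n_i) − 1}}, i.e. each nonempty subset S contributes the factor (1 − (∏_{i∈S} a_i) t) if ∑_{i∈S} n_i is odd and the inverse of that factor (which is a unit in ℚ⟦t⟧) if ∑_{i∈S} n_i is even. -/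

import Mathlib

open PowerSeries Finset

/-- Formal exponential of a power series (the genuine exponential composition when the
constant coefficient of `g` is zero): coefficient `n` of `exp g = ∑ₖ gᵏ/k!` only involves
`k ≤ n` since `g` has zero constant term. -/
noncomputable def psExp (g : PowerSeries ℚ) : PowerSeries ℚ :=
  PowerSeries.mk fun n =>
    PowerSeries.coeff n (∑ k ∈ Finset.range (n + 1), (k.factorial : ℚ)⁻¹ • g ^ k)

lemma coeff_pow_of_lt {g : ℚ⟦X⟧} (hg : constantCoeff g = 0) {n k : ℕ} (h : n < k) :
    coeff n (g ^ k) = 0 := by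
  have : (X : ℚ⟦X⟧) ^ k ∣ g ^ k := pow_dvd_pow_of_dvd (X_dvd_iff.mpr hg) k
  exact (X_pow_dvd_iff.mp this) n h

lemma coeff_psExp {g : ℚ⟦X⟧} (hg : constantCoeff g = 0) {n N : ℕ} (hN : n < N) :
    coeff n (psExp g) = coeff n (∑ k ∈ Finset.range N, (k.factorial : ℚ)⁻¹ • g ^ k) := by
  simp only [psExp, coeff_mk, map_sum]
  refine Finset.sum_subset (Finset.range_subset_range.mpr hN) (fun k hk hk' => ?_)
  rw [map_smul, coeff_pow_of_lt hg (by simpa using hk'), smul_zero]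

lemma constantCoeff_psExp (g : ℚ⟦X⟧) : constantCoeff (psExp g) = 1 := by
  have : constantCoeff (psExp g) = coeff 0 (psExp g) := by
    rw [coeff_zero_eq_constantCoeff]
  rw [this]
  simp [psExp]

lemma derivative_psExp {g : ℚ⟦X⟧} (hg : constantCoeff g = 0) :
    d⁄dX ℚ (psExp g) = d⁄dX ℚ g * psExp g := by
  ext n
  have key : (∑ k ∈ Finset.range (n + 2), (k.factorial : ℚ)⁻¹ • d⁄dX ℚ (g ^ k)) =
      d⁄dX ℚ g * ∑ k ∈ Finset.range (n + 1), (k.factorial : ℚ)⁻¹ • g ^ k := by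
    rw [Finset.sum_range_succ']
    simp only [pow_zero, Derivation.map_one_eq_zero, smul_zero, add_zero]
    rw [Finset.mul_sum]
    refine Finset.sum_congr rfl fun k _ => ?_
    have h1 : ((k : ℚ) + 1) ≠ 0 := by positivity
    have h2 : ((k.factorial : ℚ)) ≠ 0 := Nat.cast_ne_zero.mpr k.factorial_ne_zero
    rw [Derivation.leibniz_pow, ← Nat.cast_smul_eq_nsmul ℚ (k + 1)]
    simp only [Nat.add_sub_cancel, Nat.factorial_succ, Nat.cast_mul, mul_inv, smul_smul,
      smul_eq_mul, Nat.cast_add, Nat.cast_one]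
    rw [mul_smul_comm, mul_comm ((d⁄dX ℚ) g)]
    congr 1
    field_simp
  calc coeff n (d⁄dX ℚ (psExp g))
      = coeff (n + 1) (psExp g) * (n + 1) := coeff_derivative _ n
    _ = coeff (n + 1) (∑ k ∈ Finset.range (n + 2), (k.factorial : ℚ)⁻¹ • g ^ k) * (n + 1) := by
        rw [coeff_psExp hg (show n + 1 < n + 2 by omega)]
    _ = coeff n (d⁄dX ℚ (∑ k ∈ Finset.range (n + 2), (k.factorial : ℚ)⁻¹ • g ^ k)) :=
        (coeff_derivative _ n).symm
    _ = coeff n (d⁄dX ℚ g * ∑ k ∈ Finset.range (n + 1), (k.factorial : ℚ)⁻¹ • g ^ k) := by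
        rw [map_sum]
        simp only [Derivation.map_smul]
        rw [key]
    _ = coeff n (d⁄dX ℚ g * psExp g) := by
        rw [coeff_mul, coeff_mul]
        refine Finset.sum_congr rfl fun p hp => ?_
        rw [Finset.HasAntidiagonal.mem_antidiagonal] at hp
        rw [coeff_psExp hg (show p.2 < n + 1 by omega)]

lemma ode_unique {P Y Z : ℚ⟦X⟧} (hY : d⁄dX ℚ Y = P * Y) (hZ : d⁄dX ℚ Z = P * Z)
    (h0 : constantCoeff Y = constantCoeff Z) : Y = Z := by
  ext n
  induction n using Nat.strong_induction_on with
  | _ n ih =>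
    match n with
    | 0 => simpa [coeff_zero_eq_constantCoeff] using h0
    | Nat.succ m =>
      have hm : coeff m (P * Y) = coeff m (P * Z) := by
        rw [coeff_mul, coeff_mul]
        refine Finset.sum_congr rfl fun p hp => ?_
        rw [Finset.HasAntidiagonal.mem_antidiagonal] at hp
        rw [ih p.2 (by omega)]
      have h1 : coeff (m + 1) Y * (m + 1) = coeff (m + 1) Z * (m + 1) := by
        rw [← coeff_derivative, ← coeff_derivative, hY, hZ]; exact hm
      have h2 : ((m : ℚ) + 1) ≠ 0 := by positivity
      exact mul_right_cancel₀ h2 h1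

lemma psExp_add {f g : ℚ⟦X⟧} (hf : constantCoeff f = 0) (hg : constantCoeff g = 0) :
    psExp (f + g) = psExp f * psExp g := by
  refine ode_unique (P := d⁄dX ℚ (f + g)) (derivative_psExp (by simp [hf, hg])) ?_ ?_
  · rw [Derivation.leibniz, smul_eq_mul, smul_eq_mul, map_add,
      derivative_psExp hf, derivative_psExp hg]
    ring
  · simp [constantCoeff_psExp]

lemma psExp_zero : psExp (0 : ℚ⟦X⟧) = 1 := by
  ext n
  simp only [psExp, coeff_mk]
  rw [Finset.sum_eq_single 0]
  · simp
  · intro k _ hk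
    rw [zero_pow hk, smul_zero]
  · simp

/-- The geometric series `∑ cᵐ tᵐ`. -/
noncomputable def geom (c : ℚ) : ℚ⟦X⟧ := PowerSeries.mk fun m => c ^ m

lemma geom_mul (c : ℚ) : geom c * (1 - C c * X) = 1 := by
  ext n
  rw [mul_sub, mul_one, map_sub]
  have : geom c * (C c * X) = (C c * geom c) * X := by ring
  rw [this]
  cases n with
  | zero => simp [geom]
  | succ m => simp [geom, pow_succ, mul_comm]

/-- The series `-log(1 - c t) = ∑_{m ≥ 1} cᵐ tᵐ / m`. -/
noncomputable def Lc (c : ℚ) : ℚ⟦X⟧ :=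
  PowerSeries.mk fun m => if m = 0 then 0 else c ^ m / m

lemma constantCoeff_Lc (c : ℚ) : constantCoeff (Lc c) = 0 := by
  rw [← coeff_zero_eq_constantCoeff_apply]; simp [Lc]

lemma derivative_Lc (c : ℚ) : d⁄dX ℚ (Lc c) = C c * geom c := by
  ext n
  rw [coeff_derivative]
  simp only [Lc, coeff_mk, Nat.succ_ne_zero, if_false, coeff_C_mul, geom, coeff_mk]
  have : ((n : ℚ) + 1) ≠ 0 := by positivity
  field_simp
  push_cast
  ring

lemma psExp_neg_Lc (c : ℚ) : psExp (-(Lc c)) = 1 - C c * X := by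
  refine ode_unique (P := d⁄dX ℚ (-(Lc c)))
    (derivative_psExp (by simp [constantCoeff_Lc])) ?_ ?_
  · have hl : d⁄dX ℚ (1 - C c * X) = -(C c) := by
      rw [map_sub, Derivation.map_one_eq_zero]
      simp [Derivation.leibniz, smul_eq_mul]
    rw [hl, map_neg, derivative_Lc]
    calc -(C c) = -(C c) * (geom c * (1 - C c * X)) := by rw [geom_mul, mul_one]
      _ = -(C c * geom c) * (1 - C c * X) := by ring
  · simp [constantCoeff_psExp]

lemma psExp_Lc_mul (c : ℚ) : psExp (Lc c) * (1 - C c * X) = 1 := by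
  rw [← psExp_neg_Lc, ← psExp_add (constantCoeff_Lc c) (by simp [constantCoeff_Lc]),
    add_neg_cancel, psExp_zero]

lemma psExp_Lc (c : ℚ) : psExp (Lc c) = (1 - C c * X)⁻¹ := by
  rw [PowerSeries.eq_inv_iff_mul_eq_one]
  · exact psExp_Lc_mul c
  · simp

lemma psExp_sum {ι : Type*} (s : Finset ι) (f : ι → ℚ⟦X⟧)
    (hf : ∀ i ∈ s, constantCoeff (f i) = 0) :
    psExp (∑ i ∈ s, f i) = ∏ i ∈ s, psExp (f i) := by
  induction s using Finset.cons_induction with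
  | empty => simp [psExp_zero]
  | cons i s his ih =>
    rw [Finset.sum_cons, Finset.prod_cons,
      psExp_add (hf i (Finset.mem_cons_self i s)) (by
        rw [map_sum]
        exact Finset.sum_eq_zero fun j hj => hf j (Finset.mem_cons_of_mem hj)),
      ih fun j hj => hf j (Finset.mem_cons_of_mem hj)]

/-- The Lefschetz zeta function of a self-map of a product of spheres
`S^{n₁} × ⋯ × S^{n_l}` with basic eigenvalues `a₁, …, a_l` equals
`(1-t)⁻¹ ∏_{∅ ≠ S ⊆ {1,…,l}} (1 - (∏_{i∈S} aᵢ) t)^{(-1)^{(∑_{i∈S} nᵢ) - 1}}`. -/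
theorem lefschetz_zeta_product_of_spheres
    (l : ℕ) (hl : 1 ≤ l) (n : Fin l → ℕ) (hn : ∀ i, 0 < n i) (a : Fin l → ℤ) :
    psExp (PowerSeries.mk fun m =>
        if m = 0 then 0 else (∏ i, (1 + (-1) ^ n i * (a i : ℚ) ^ m)) / m) =
      (1 - PowerSeries.X : PowerSeries ℚ)⁻¹ *
        ∏ S ∈ (Finset.univ : Finset (Fin l)).powerset.erase ∅,
          (if Odd (∑ i ∈ S, n i) then
              1 - PowerSeries.C (∏ i ∈ S, (a i : ℚ)) * PowerSeries.X
           else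
              (1 - PowerSeries.C (∏ i ∈ S, (a i : ℚ)) * PowerSeries.X)⁻¹) := by
  have hdec : (PowerSeries.mk fun m =>
        if m = 0 then 0 else (∏ i, (1 + (-1) ^ n i * (a i : ℚ) ^ m)) / m)
      = ∑ S ∈ (Finset.univ : Finset (Fin l)).powerset,
          (if Odd (∑ i ∈ S, n i) then -(Lc (∏ i ∈ S, (a i : ℚ)))
           else Lc (∏ i ∈ S, (a i : ℚ))) := by
    ext m
    rw [coeff_mk, map_sum]
    by_cases hm : m = 0
    · subst hm
      simp [Lc, apply_ite (coeff 0)]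
    · have hprod : (∏ i, (1 + (-1 : ℚ) ^ n i * (a i : ℚ) ^ m)) =
          ∑ S ∈ (Finset.univ : Finset (Fin l)).powerset,
            (-1 : ℚ) ^ (∑ i ∈ S, n i) * (∏ i ∈ S, (a i : ℚ)) ^ m := by
        have h := Finset.prod_add (fun i => (-1 : ℚ) ^ n i * (a i : ℚ) ^ m)
          (fun _ => (1 : ℚ)) Finset.univ
        simp only [prod_const_one, mul_one] at h
        rw [show (∏ i, (1 + (-1 : ℚ) ^ n i * (a i : ℚ) ^ m)) =
            ∏ i, ((-1 : ℚ) ^ n i * (a i : ℚ) ^ m + 1) from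
          Finset.prod_congr rfl fun i _ => by ring, h]
        refine Finset.sum_congr rfl fun S _ => ?_
        rw [Finset.prod_mul_distrib, Finset.prod_pow_eq_pow_sum, ← Finset.prod_pow]
      rw [if_neg hm, hprod, Finset.sum_div]
      refine Finset.sum_congr rfl fun S _ => ?_
      rcases Nat.even_or_odd (∑ i ∈ S, n i) with he | ho
      · rw [if_neg (by simpa using Nat.not_odd_iff_even.mpr he), he.neg_one_pow, one_mul]
        simp [Lc, if_neg hm]
      · rw [if_pos ho, ho.neg_one_pow]
        simp only [map_neg, Lc, coeff_mk, if_neg hm]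
        ring
  rw [hdec, psExp_sum _ _ (fun S _ => by
    split <;> simp [constantCoeff_Lc])]
  have hterm : ∀ S : Finset (Fin l),
      psExp (if Odd (∑ i ∈ S, n i) then -(Lc (∏ i ∈ S, (a i : ℚ)))
             else Lc (∏ i ∈ S, (a i : ℚ)))
      = if Odd (∑ i ∈ S, n i) then 1 - C (∏ i ∈ S, (a i : ℚ)) * X
        else (1 - C (∏ i ∈ S, (a i : ℚ)) * X)⁻¹ := by
    intro S
    split
    · exact psExp_neg_Lc _
    · exact psExp_Lc _
  simp only [hterm]
  rw [← Finset.mul_prod_erase _ _ (Finset.mem_powerset.mpr (Finset.empty_subset _))]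
  congr 1
  simp
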